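/- If C is a 3×3 real matrix with C⁻¹ = I Cᵀ I (I = diag(-1,1,1)), c₁₁ > 1, c₁₂ = c₂₁, and c₁₃ = c₃₁, then c₂₃ = c₃₂, i.e. C is symmetric. -/
import Mathlib

open Matrix
noncomputable def Imat : Matrix (Fin 3) (Fin 3) ℝ := diagonal ![-1, 1, 1]
noncomputable def amat : Matrix (Fin 3) (Fin 3) ℝ := !![0,1,0; 1,0,0; 0,0,0]
noncomputable def bmat : Matrix (Fin 3) (Fin 3) ℝ := !![0,0,1; 0,0,0; 1,0,0]
noncomputable def cmat : Matrix (Fin 3) (Fin 3) ℝ := !![0,0,0; 0,0,-1; 0,1,0]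
noncomputable def rot2 (η : ℝ) : Matrix (Fin 2) (Fin 2) ℝ :=
  !![Real.cos η, -Real.sin η; Real.sin η, Real.cos η]
noncomputable def Kmat (η : ℝ) : Matrix (Fin 3) (Fin 3) ℝ :=
  !![1,0,0; 0,Real.cos η,-Real.sin η; 0,Real.sin η,Real.cos η]
def inSO21 (C : Matrix (Fin 3) (Fin 3) ℝ) : Prop :=
  C⁻¹ = Imat * Cᵀ * Imat ∧ C.det = 1 ∧ 1 ≤ C 0 0
theorem stmt5 (C : Matrix (Fin 3) (Fin 3) ℝ) (hunit : IsUnit C.det)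
    (hps : C⁻¹ = Imat * Cᵀ * Imat) (h11 : 1 < C 0 0)
    (h12 : C 0 1 = C 1 0) (h13 : C 0 2 = C 2 0) :
    C 1 2 = C 2 1 ∧ Cᵀ = C := by
  have hL := mul_nonsing_inv C hunit
  have hR := nonsing_inv_mul C hunit
  rw [hps] at hL hR
  have e00 := congrFun (congrFun hL 0) 0
  have e01 := congrFun (congrFun hL 0) 1
  have e02 := congrFun (congrFun hL 0) 2
  have f01 := congrFun (congrFun hR 0) 1
  have f02 := congrFun (congrFun hR 0) 2
  simp [Imat, Matrix.mul_apply, Matrix.diagonal, Fin.sum_univ_three, Matrix.one_apply] at e00 e01 e02 f01 f02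
  simp only [h12, h13] at e00 e01 e02 f01 f02
  have key : C 1 2 = C 2 1 := by
    rcases eq_or_ne (C 1 0) 0 with ha | ha
    · rcases eq_or_ne (C 2 0) 0 with hb | hb
      · exfalso; rw [ha, hb] at e00; nlinarith
      · have : C 2 0 * C 1 2 = C 2 0 * C 2 1 := by nlinarith [e02, f02]
        exact mul_left_cancel₀ hb this
    · have : C 1 0 * C 1 2 = C 1 0 * C 2 1 := by nlinarith [e01, f01]
      exact mul_left_cancel₀ ha this
  refine ⟨key, ?_⟩
  ext i j
  fin_cases i <;> fin_cases j <;>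
    simp [Matrix.transpose_apply, h12, h13, key]
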